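/- Let G = (V,E) be a locally finite directed graph and let ā, b̄ be finite tuples from V of equal length such that for every n there is an isomorphism of the induced subgraphs (B_n(ā), E) and (B_n(b̄), E) sending ā to b̄. Then there is an isomorphism between the union of the connected components of G containing the entries of ā and the union of the connected components containing the entries of b̄ which sends ā to b̄. -/

import Mathlib

namespace AutoStruct

/-! ### Regular languages, convolutions, regular relations -/

/-- A language is regular if it is accepted by a DFA with finitely many states. -/
def IsRegularLang {α : Type} (L : Set (List α)) : Prop :=
  ∃ (σ : Type) (_ : Fintype σ) (M : DFA α σ), M.accepts = L

/-- Convolution of a pair of words, using `none` as the padding symbol `◇`. -/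
def conv2 {α : Type} (u v : List α) : List (Option α × Option α) :=
  (List.range (max u.length v.length)).map fun k => (u[k]?, v[k]?)

/-- Convolution of an `n`-tuple of words, using `none` as the padding symbol `◇`. -/
def conv {α : Type} {n : ℕ} (w : Fin n → List α) : List (Fin n → Option α) :=
  (List.range (Finset.univ.sup fun i => (w i).length)).map fun k i => (w i)[k]?

/-- A binary relation on words is regular if the language of convolutions of its pairs
is regular. -/
def IsRegularRel2 {α : Type} (r : List α → List α → Prop) : Prop :=
  IsRegularLang {w | ∃ u v, r u v ∧ w = conv2 u v}

/-- An `n`-ary relation on words is regular if the language of convolutions of its tuples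
is regular. -/
def IsRegularRel {α : Type} {n : ℕ} (R : (Fin n → List α) → Prop) : Prop :=
  IsRegularLang {w | ∃ t, R t ∧ w = conv t}

/-! ### Ordinal heights of well-founded relations -/

/-- The rank `r_A(x) = sup { r_A(y) + 1 : (y,x) ∈ R }` of an element of a well-founded
relation. -/
noncomputable def wfRank {β : Type} {r : β → β → Prop} (h : WellFounded r) (x : β) :
    Ordinal :=
  (h.apply x).rank

/-- The ordinal height `r(A) = sup { r_A(x) : x ∈ A }` of a well-founded relation. -/
noncomputable def relHeight {β : Type} {r : β → β → Prop} (h : WellFounded r) : Ordinal :=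
  ⨆ x, wfRank h x

/-! ### Computable ordinals -/

/-- An ordinal is computable if it is the order type of a computable (decidable) well-ordering
of (a decidable set of) natural numbers. -/
def IsComputableOrdinal (α : Ordinal) : Prop :=
  ∃ (A : Set ℕ) (r : ℕ → ℕ → Prop) (_ : ComputablePred fun n => n ∈ A)
    (_ : ComputablePred fun p : ℕ × ℕ => r p.1 p.2)
    (hwo : IsWellOrder {n // n ∈ A} fun x y => r x.1 y.1),
    @Ordinal.type _ _ hwo = α

/-- `ω₁^CK`, the least non-computable ordinal. -/
noncomputable def omega1CK : Ordinal :=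
  sInf {α | ¬ IsComputableOrdinal α}

/-! ### Scott rank machinery for relational structures -/

section ScottRank

variable {D : Type}

/-- Atomic (quantifier-free) equivalence of two tuples in a relational structure with
relations `rel i` of arity `ar i`: the tuples satisfy the same quantifier-free formulas. -/
def atomEquiv {ν : ℕ} {ar : Fin ν → ℕ} (rel : (i : Fin ν) → (Fin (ar i) → D) → Prop)
    {k : ℕ} (a b : Fin k → D) : Prop :=
  (∀ i j, a i = a j ↔ b i = b j) ∧
  ∀ (i : Fin ν) (f : Fin (ar i) → Fin k), rel i (a ∘ f) ↔ rel i (b ∘ f)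

/-- The back-and-forth equivalence relations `ā ≡^α b̄` on tuples of a relational
structure. -/
noncomputable def bfEquiv {ν : ℕ} {ar : Fin ν → ℕ}
    (rel : (i : Fin ν) → (Fin (ar i) → D) → Prop)
    (α : Ordinal) (k : ℕ) (a b : Fin k → D) : Prop :=
  if α = 0 then atomEquiv rel a b
  else ∀ β < α,
    (∀ (l : ℕ) (c : Fin l → D), ∃ d : Fin l → D,
      bfEquiv rel β (k + l) (Fin.append a c) (Fin.append b d)) ∧
    (∀ (l : ℕ) (d : Fin l → D), ∃ c : Fin l → D,
      bfEquiv rel β (k + l) (Fin.append a c) (Fin.append b d))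
termination_by α
decreasing_by all_goals assumption

/-- An automorphism of a relational structure. -/
def IsAutomorphism {ν : ℕ} {ar : Fin ν → ℕ} (rel : (i : Fin ν) → (Fin (ar i) → D) → Prop)
    (g : D ≃ D) : Prop :=
  ∀ (i : Fin ν) (t : Fin (ar i) → D), rel i t ↔ rel i fun j => g (t j)

/-- The Scott rank of a tuple: the least `β` such that `≡^β`-equivalence to the tuple implies
being in the same automorphism orbit. -/
noncomputable def tupleSR {ν : ℕ} {ar : Fin ν → ℕ}
    (rel : (i : Fin ν) → (Fin (ar i) → D) → Prop) {k : ℕ} (a : Fin k → D) : Ordinal :=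
  sInf {β | ∀ b : Fin k → D, bfEquiv rel β k a b →
    ∃ g : D ≃ D, IsAutomorphism rel g ∧ ∀ i, g (a i) = b i}

/-- The Scott rank of a relational structure: the least ordinal greater than the Scott ranks
of all finite tuples. -/
noncomputable def scottRank {ν : ℕ} {ar : Fin ν → ℕ}
    (rel : (i : Fin ν) → (Fin (ar i) → D) → Prop) : Ordinal :=
  sInf {γ | ∀ (k : ℕ) (a : Fin k → D), tupleSR rel a < γ}

end ScottRank

/-! ### Word structures: automatic and computable structures -/

/-- A structure `(A; R₁, …, R_ν)` whose domain is a set of words over the alphabet `α`,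
with `ν` relations, the `i`-th of arity `ar i`. -/
structure WordStructure (α : Type) (ν : ℕ) (ar : Fin ν → ℕ) where
  dom : Set (List α)
  rel : (i : Fin ν) → (Fin (ar i) → List α) → Prop
  rel_dom : ∀ i t, rel i t → ∀ j, t j ∈ dom

/-- The relations of a word structure, restricted to (the subtype of) its domain. -/
def WordStructure.relOn {α : Type} {ν : ℕ} {ar : Fin ν → ℕ} (S : WordStructure α ν ar) :
    (i : Fin ν) → (Fin (ar i) → ↥S.dom) → Prop :=
  fun i t => S.rel i fun j => ↑(t j)

/-- A word structure is automatic if its domain is a regular language and all its relations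
are regular. -/
def WordStructure.IsAutomatic {α : Type} {ν : ℕ} {ar : Fin ν → ℕ}
    (S : WordStructure α ν ar) : Prop :=
  IsRegularLang S.dom ∧ ∀ i, IsRegularRel (S.rel i)

/-- A word structure is computable if its domain and all its relations are computable. -/
def WordStructure.IsComputableStr {α : Type} [Primcodable α] {ν : ℕ} {ar : Fin ν → ℕ}
    (S : WordStructure α ν ar) : Prop :=
  ComputablePred (fun w : List α => w ∈ S.dom) ∧
    ∀ i, ComputablePred fun t : Fin (ar i) → List α => S.rel i t

/-- The Scott rank of a word structure. -/
noncomputable def WordStructure.SR {α : Type} {ν : ℕ} {ar : Fin ν → ℕ}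
    (S : WordStructure α ν ar) : Ordinal :=
  scottRank S.relOn

/-! ### Abstract relational structures, isomorphism, ω-fold disjoint union -/

/-- An abstract relational structure with `ν` relations of arities `ar`. -/
structure RelStruct (ν : ℕ) (ar : Fin ν → ℕ) where
  carrier : Type
  rel : (i : Fin ν) → (Fin (ar i) → carrier) → Prop

/-- The abstract relational structure underlying a word structure. -/
def WordStructure.toRelStruct {α : Type} {ν : ℕ} {ar : Fin ν → ℕ}
    (S : WordStructure α ν ar) : RelStruct ν ar :=
  ⟨↥S.dom, S.relOn⟩

/-- Isomorphism of abstract relational structures. -/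
def RelStruct.Iso {ν : ℕ} {ar : Fin ν → ℕ} (S T : RelStruct ν ar) : Prop :=
  ∃ g : S.carrier ≃ T.carrier, ∀ i t, S.rel i t ↔ T.rel i fun j => g (t j)

/-- The ω-fold disjoint union of an abstract relational structure: countably many disjoint
copies, a relation holding of a tuple iff all components lie in the same copy and the
corresponding tuple satisfies the relation in the original structure. -/
def omegaFold {ν : ℕ} {ar : Fin ν → ℕ} (S : RelStruct ν ar) : RelStruct ν ar :=
  ⟨S.carrier × ℕ, fun i t => (∀ j j', (t j).2 = (t j').2) ∧ S.rel i fun j => (t j).1⟩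

/-! ### Trees and Cantor–Bendixson rank -/

/-- `(T, le)` is a partial order tree: `le` is a partial order with a least element in which
every set `{x : x ≤ y}` is finite and linearly ordered. -/
def IsPOTree {T : Type} (le : T → T → Prop) : Prop :=
  (∀ x, le x x) ∧ (∀ x y z, le x y → le y z → le x z) ∧
  (∀ x y, le x y → le y x → x = y) ∧
  (∃ r, ∀ x, le r x) ∧
  (∀ y, {x | le x y}.Finite ∧ ∀ x z, le x y → le z y → le x z ∨ le z x)

/-- `(T, S)` is a successor tree: the reflexive–transitive closure of `S` is a partial order
tree. -/
def IsSuccTree {T : Type} (S : T → T → Prop) : Prop :=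
  IsPOTree (Relation.ReflTransGen S)

/-- The derivative of (a subset of) a successor tree: the set of nodes lying on at least two
distinct infinite paths within the subset. -/
def treeDeriv {T : Type} (S : T → T → Prop) (X : Set T) : Set T :=
  {x ∈ X | ∃ p q : ℕ → T, p 0 = x ∧ q 0 = x ∧ (∀ n, p n ∈ X) ∧ (∀ n, q n ∈ X) ∧
    (∀ n, S (p n) (p (n + 1))) ∧ (∀ n, S (q n) (q (n + 1))) ∧ p ≠ q}

/-- The transfinite iteration of the tree derivative, starting from the whole tree. -/
noncomputable def treeDerivIter {T : Type} (S : T → T → Prop) (α : Ordinal) : Set T :=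
  Ordinal.limitRecOn α Set.univ (fun _ X => treeDeriv S X)
    (fun o _ ih => ⋂ (β : Ordinal) (h : β < o), ih β h)

/-- The Cantor–Bendixson rank of a successor tree: the least `α` such that the `α`-th
derivative equals the `α+1`-st derivative. -/
noncomputable def CBrank {T : Type} (S : T → T → Prop) : Ordinal :=
  sInf {α | treeDerivIter S (α + 1) = treeDerivIter S α}

/-- The derivative of (a subset of) a partial order tree: the set of nodes lying on at least
two distinct infinite paths (i.e. admitting two eventually incomparable infinite strictly
increasing chains) within the subset. -/
def poDeriv {T : Type} (le : T → T → Prop) (X : Set T) : Set T :=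
  {x ∈ X | ∃ p q : ℕ → T, p 0 = x ∧ q 0 = x ∧ (∀ n, p n ∈ X) ∧ (∀ n, q n ∈ X) ∧
    (∀ n, le (p n) (p (n + 1)) ∧ p n ≠ p (n + 1)) ∧
    (∀ n, le (q n) (q (n + 1)) ∧ q n ≠ q (n + 1)) ∧
    ∃ n m, ¬ le (p n) (q m) ∧ ¬ le (q m) (p n)}

noncomputable def poDerivIter {T : Type} (le : T → T → Prop) (α : Ordinal) : Set T :=
  Ordinal.limitRecOn α Set.univ (fun _ X => poDeriv le X)
    (fun o _ ih => ⋂ (β : Ordinal) (h : β < o), ih β h)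

/-- The Cantor–Bendixson rank of a partial order tree. -/
noncomputable def CBrankPO {T : Type} (le : T → T → Prop) : Ordinal :=
  sInf {α | poDerivIter le (α + 1) = poDerivIter le α}

/-- The product of two successor trees, where `r₂` is the root of the second tree. -/
def prodSucc {T₁ T₂ : Type} (S₁ : T₁ → T₁ → Prop) (S₂ : T₂ → T₂ → Prop) (r₂ : T₂) :
    T₁ × T₂ → T₁ × T₂ → Prop :=
  fun p q =>
    (p.2 = r₂ ∧ ((q.1 = p.1 ∧ S₂ p.2 q.2) ∨ (S₁ p.1 q.1 ∧ p.2 = q.2))) ∨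
    (p.2 ≠ r₂ ∧ q.1 = p.1 ∧ S₂ p.2 q.2)

/-! ### Locally finite graphs -/

/-- A directed graph is locally finite if every vertex has finitely many neighbours
(in either direction). -/
def LocallyFiniteGraph {V : Type} (E : V → V → Prop) : Prop :=
  ∀ x, {y | E x y ∨ E y x}.Finite

/-- A graph as a relational structure with one binary relation. -/
def graphRel {V : Type} (E : V → V → Prop) : (i : Fin 1) → (Fin 2 → V) → Prop :=
  fun _ t => E (t 0) (t 1)

/-- `ball E U n` is the `n`-neighbourhood of `U`: vertices reachable from `U` by `n` or fewer
edges (traversed in either direction). -/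
def ball {V : Type} (E : V → V → Prop) (U : Set V) : ℕ → Set V
  | 0 => U
  | n + 1 => ball E U n ∪ {v | ∃ u ∈ ball E U n, E u v ∨ E v u}

/-- Connectivity with respect to the symmetrization of `E`. -/
def conn {V : Type} (E : V → V → Prop) : V → V → Prop :=
  Relation.ReflTransGen fun u v => E u v ∨ E v u

section L11

variable {V : Type} (E : V → V → Prop)

lemma ball_mono_succ (U : Set V) (n : ℕ) : ball E U n ⊆ ball E U (n+1) :=
  Set.subset_union_left

lemma ball_mono (U : Set V) {m n : ℕ} (h : m ≤ n) : ball E U m ⊆ ball E U n := by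
  induction n with
  | zero => rw [Nat.le_zero.mp h]
  | succ n ih =>
    rcases Nat.lt_or_ge m (n+1) with h' | h'
    · exact (ih (Nat.lt_succ_iff.mp h')).trans (ball_mono_succ E U n)
    · rw [le_antisymm h h']

lemma ball_finite (hlf : LocallyFiniteGraph E) {U : Set V} (hU : U.Finite) :
    ∀ n, (ball E U n).Finite
  | 0 => hU
  | (n+1) => by
    have ih := ball_finite hlf hU n
    refine Set.Finite.union ih (((ih.biUnion fun u _ => hlf u).subset ?_))
    rintro v ⟨u, hu, hv⟩
    exact Set.mem_biUnion hu hv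

lemma conn_eq_iUnion_ball {k : ℕ} (c : Fin k → V) :
    {v | ∃ i, conn E (c i) v} = ⋃ n, ball E (Set.range c) n := by
  ext v
  simp only [Set.mem_setOf_eq, Set.mem_iUnion]
  constructor
  · rintro ⟨i, hc⟩
    induction hc with
    | refl => exact ⟨0, i, rfl⟩
    | tail _ h ih => obtain ⟨n, hn⟩ := ih; exact ⟨n+1, Or.inr ⟨_, hn, h⟩⟩
  · rintro ⟨n, hn⟩
    induction n generalizing v with
    | zero => obtain ⟨i, rfl⟩ := hn; exact ⟨i, Relation.ReflTransGen.refl⟩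
    | succ n ih =>
      rcases hn with hn | ⟨u, hu, he⟩
      · exact ih v hn
      · obtain ⟨i, hi⟩ := ih u hu
        exact ⟨i, hi.tail he⟩

structure Good {k : ℕ} (a b : Fin k → V) (m : ℕ) (f : V → V) : Prop where
  inj : ∀ x ∈ ball E (Set.range a) m, ∀ y ∈ ball E (Set.range a) m, f x = f y → x = y
  img : f '' ball E (Set.range a) m = ball E (Set.range b) m
  edge : ∀ x ∈ ball E (Set.range a) m, ∀ y ∈ ball E (Set.range a) m, (E x y ↔ E (f x) (f y))
  maps : ∀ i, f (a i) = b i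

variable {E}

lemma Good.image_ball {k : ℕ} {a b : Fin k → V} {N : ℕ} {f : V → V}
    (hf : Good E a b N f) :
    ∀ m ≤ N, f '' ball E (Set.range a) m ⊆ ball E (Set.range b) m := by
  intro m
  induction m with
  | zero =>
    rintro _ _ ⟨_, ⟨i, rfl⟩, rfl⟩
    exact ⟨i, (hf.maps i).symm⟩
  | succ m ih =>
    intro hm
    rintro _ ⟨v, hv, rfl⟩
    rcases hv with hv | ⟨u, hu, he⟩
    · exact ball_mono_succ E _ m (ih (Nat.le_of_succ_le hm) ⟨v, hv, rfl⟩)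
    · have hub : f u ∈ ball E (Set.range b) m := ih (Nat.le_of_succ_le hm) ⟨u, hu, rfl⟩
      have huN : u ∈ ball E (Set.range a) N :=
        ball_mono E _ (Nat.le_of_succ_le hm) hu
      have hvN : v ∈ ball E (Set.range a) N :=
        ball_mono E _ hm (Or.inr ⟨u, hu, he⟩)
      refine Or.inr ⟨f u, hub, ?_⟩
      rcases he with he | he
      · exact Or.inl ((hf.edge u huN v hvN).mp he)
      · exact Or.inr ((hf.edge v hvN u huN).mp he)

lemma Good.ball_subset_image {k : ℕ} {a b : Fin k → V} {N : ℕ} {f : V → V}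
    (hf : Good E a b N f) :
    ∀ m ≤ N, ball E (Set.range b) m ⊆ f '' ball E (Set.range a) m := by
  intro m
  induction m with
  | zero =>
    rintro _ w ⟨i, rfl⟩
    exact ⟨a i, ⟨i, rfl⟩, hf.maps i⟩
  | succ m ih =>
    intro hm w hw
    rcases hw with hw | ⟨u, hu, he⟩
    · obtain ⟨x, hx, hfx⟩ := ih (Nat.le_of_succ_le hm) hw
      exact ⟨x, ball_mono_succ E _ m hx, hfx⟩
    · obtain ⟨x, hx, rfl⟩ := ih (Nat.le_of_succ_le hm) hu
      have hwN : w ∈ ball E (Set.range b) N :=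
        ball_mono E _ hm (Or.inr ⟨f x, hu, he⟩)
      rw [← hf.img] at hwN
      obtain ⟨y, hy, rfl⟩ := hwN
      have hxN : x ∈ ball E (Set.range a) N :=
        ball_mono E _ (Nat.le_of_succ_le hm) hx
      refine ⟨y, Or.inr ⟨x, hx, ?_⟩, rfl⟩
      rcases he with he | he
      · exact Or.inl ((hf.edge x hxN y hy).mpr he)
      · exact Or.inr ((hf.edge y hy x hxN).mpr he)

lemma Good.mono {k : ℕ} {a b : Fin k → V} {N m : ℕ} {f : V → V}
    (hm : m ≤ N) (hf : Good E a b N f) : Good E a b m f where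
  inj x hx y hy := hf.inj x (ball_mono E _ hm hx) y (ball_mono E _ hm hy)
  img := Set.Subset.antisymm (hf.image_ball m hm) (hf.ball_subset_image m hm)
  edge x hx y hy := hf.edge x (ball_mono E _ hm hx) y (ball_mono E _ hm hy)
  maps := hf.maps

lemma ultra_pigeon {β : Type} (U : Ultrafilter ℕ) (s : Finset β) (h : ℕ → β)
    (hmem : {n | h n ∈ s} ∈ U) : ∃ w ∈ s, {n | h n = w} ∈ U := by
  classical
  induction s using Finset.induction_on with
  | empty =>
    have : ({n | h n ∈ (∅ : Finset β)} : Set ℕ) = ∅ := by simp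
    rw [this] at hmem
    exact (Ultrafilter.empty_notMem hmem).elim
  | @insert a s ha ih =>
    have : ({n | h n ∈ insert a s} : Set ℕ) = {n | h n = a} ∪ {n | h n ∈ s} := by
      ext n; simp [Finset.mem_insert]
    rw [this] at hmem
    rcases Ultrafilter.union_mem_iff.mp hmem with hm | hm
    · exact ⟨a, Finset.mem_insert_self a s, hm⟩
    · obtain ⟨w, hw, hw'⟩ := ih hm
      exact ⟨w, Finset.mem_insert_of_mem hw, hw'⟩

lemma good_exists {k : ℕ} {a b : Fin k → V} (n : ℕ)
    (hn : ∃ g : ↥(ball E (Set.range a) n) ≃ ↥(ball E (Set.range b) n),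
      (∀ x y : ↥(ball E (Set.range a) n), E ↑x ↑y ↔ E ↑(g x) ↑(g y)) ∧
      ∀ (x : ↥(ball E (Set.range a) n)) (i : Fin k), (x : V) = a i → (↑(g x) : V) = b i) :
    ∃ f, Good E a b n f := by
  classical
  obtain ⟨g, hg1, hg2⟩ := hn
  refine ⟨fun v => if hv : v ∈ ball E (Set.range a) n then ↑(g ⟨v, hv⟩) else v, ?_, ?_, ?_, ?_⟩
  · intro x hx y hy hxy
    simp only [dif_pos hx, dif_pos hy] at hxy
    have := g.injective (Subtype.ext hxy)
    exact congrArg Subtype.val this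
  · ext w
    constructor
    · rintro ⟨v, hv, rfl⟩
      simp only [dif_pos hv]
      exact (g ⟨v, hv⟩).2
    · intro hw
      refine ⟨↑(g.symm ⟨w, hw⟩), (g.symm ⟨w, hw⟩).2, ?_⟩
      simp only [dif_pos (g.symm ⟨w, hw⟩).2]
      have : (⟨↑(g.symm ⟨w, hw⟩), (g.symm ⟨w, hw⟩).2⟩ : ↥(ball E (Set.range a) n))
          = g.symm ⟨w, hw⟩ := rfl
      rw [this, Equiv.apply_symm_apply]
  · intro x hx y hy
    simp only [dif_pos hx, dif_pos hy]
    exact hg1 ⟨x, hx⟩ ⟨y, hy⟩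
  · intro i
    have hai : a i ∈ ball E (Set.range a) n := ball_mono E _ (Nat.zero_le n) ⟨i, rfl⟩
    simp only [dif_pos hai]
    exact hg2 ⟨a i, hai⟩ i rfl

/-- **Lemma 11.** In a locally finite directed graph, if for every `n` the `n`-neighbourhoods
of `ā` and `b̄` are isomorphic via a map sending `ā` to `b̄`, then the unions of the connected
components containing `ā` and `b̄` are isomorphic via a map sending `ā` to `b̄`. -/
theorem component_iso_of_neighbourhood_isos {V : Type} (E : V → V → Prop)
    (hlf : LocallyFiniteGraph E) {k : ℕ} (a b : Fin k → V)
    (h : ∀ n : ℕ, ∃ g : ↥(ball E (Set.range a) n) ≃ ↥(ball E (Set.range b) n),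
      (∀ x y : ↥(ball E (Set.range a) n), E ↑x ↑y ↔ E ↑(g x) ↑(g y)) ∧
      ∀ (x : ↥(ball E (Set.range a) n)) (i : Fin k), (x : V) = a i → (↑(g x) : V) = b i) :
    ∃ g : ↥{v | ∃ i, conn E (a i) v} ≃ ↥{v | ∃ i, conn E (b i) v},
      (∀ x y : ↥{v | ∃ i, conn E (a i) v}, E ↑x ↑y ↔ E ↑(g x) ↑(g y)) ∧
      ∀ (x : ↥{v | ∃ i, conn E (a i) v}) (i : Fin k),
        (x : V) = a i → (↑(g x) : V) = b i := by
  classical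
  choose gs hgs using fun n => good_exists n (h n)
  obtain ⟨U, hU⟩ := Ultrafilter.exists_le (Filter.cofinite : Filter ℕ)
  have hge : ∀ m : ℕ, {n | m ≤ n} ∈ U := by
    intro m
    apply hU
    rw [Filter.mem_cofinite]
    have : {n : ℕ | m ≤ n}ᶜ = Set.Iio m := by ext n; simp only [Set.mem_compl_iff, Set.mem_setOf_eq, Set.mem_Iio, Nat.not_le]
    rw [this]
    exact Set.finite_Iio m
  have hgood : ∀ m n, m ≤ n → Good E a b m (gs n) := fun m n hmn => (hgs n).mono hmn
  have hafin : ∀ m, (ball E (Set.range a) m).Finite :=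
    fun m => ball_finite E hlf (Set.finite_range a) m
  have hbfin : ∀ m, (ball E (Set.range b) m).Finite :=
    fun m => ball_finite E hlf (Set.finite_range b) m
  -- the limit map
  have hGex : ∀ v, (∃ m, v ∈ ball E (Set.range a) m) → ∃ w, {n | gs n v = w} ∈ U := by
    rintro v ⟨m, hv⟩
    obtain ⟨w, _, hw⟩ := ultra_pigeon U (hbfin m).toFinset (fun n => gs n v)
      (Filter.mem_of_superset (hge m) (by
        intro n hn
        simp only [Set.mem_setOf_eq, Set.Finite.mem_toFinset]
        rw [← (hgood m n hn).img]
        exact ⟨v, hv, rfl⟩))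
    exact ⟨w, hw⟩
  have hGch : ∀ v, ∃ w, (∃ m, v ∈ ball E (Set.range a) m) → {n | gs n v = w} ∈ U := by
    intro v
    by_cases hv : ∃ m, v ∈ ball E (Set.range a) m
    · obtain ⟨w, hw⟩ := hGex v hv
      exact ⟨w, fun _ => hw⟩
    · exact ⟨v, fun h' => absurd h' hv⟩
  choose G hG using hGch
  have hGmem : ∀ m v, v ∈ ball E (Set.range a) m → {n | gs n v = G v} ∈ U :=
    fun m v hv => hG v ⟨m, hv⟩
  have hGood : ∀ m, Good E a b m G := by
    intro m
    constructor
    · -- injectivity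
      intro x hx y hy hxy
      obtain ⟨n, hn⟩ := Filter.nonempty_of_mem
        (Filter.inter_mem (Filter.inter_mem (hGmem m x hx) (hGmem m y hy)) (hge m))
      exact (hgood m n hn.2).inj x hx y hy (by rw [hn.1.1, hn.1.2, hxy])
    · -- image
      apply Set.Subset.antisymm
      · rintro _ ⟨v, hv, rfl⟩
        obtain ⟨n, hn⟩ := Filter.nonempty_of_mem
          (Filter.inter_mem (hGmem m v hv) (hge m))
        rw [← hn.1, ← (hgood m n hn.2).img]
        exact ⟨v, hv, rfl⟩
      · intro w hw
        have hxs : ∀ n, ∃ x, m ≤ n → x ∈ ball E (Set.range a) m ∧ gs n x = w := by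
          intro n
          by_cases hn : m ≤ n
          · have := (hgood m n hn).img
            rw [← this] at hw
            obtain ⟨x, hx, hgx⟩ := hw
            exact ⟨x, fun _ => ⟨hx, hgx⟩⟩
          · exact ⟨w, fun h' => absurd h' hn⟩
        choose xs hxs using hxs
        obtain ⟨x, hxm, hxU⟩ := ultra_pigeon U (hafin m).toFinset xs
          (Filter.mem_of_superset (hge m) (by
            intro n hn
            simp only [Set.mem_setOf_eq, Set.Finite.mem_toFinset]
            exact (hxs n hn).1))
        rw [Set.Finite.mem_toFinset] at hxm
        obtain ⟨n, hn⟩ := Filter.nonempty_of_mem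
          (Filter.inter_mem (Filter.inter_mem hxU (hGmem m x hxm)) (hge m))
        refine ⟨x, hxm, ?_⟩
        have h1 : gs n x = w := by rw [← hn.1.1]; exact (hxs n hn.2).2
        rw [← hn.1.2, h1]
    · -- edges
      intro x hx y hy
      obtain ⟨n, hn⟩ := Filter.nonempty_of_mem
        (Filter.inter_mem (Filter.inter_mem (hGmem m x hx) (hGmem m y hy)) (hge m))
      rw [← hn.1.1, ← hn.1.2]
      exact (hgood m n hn.2).edge x hx y hy
    · -- maps a to b
      intro i
      have hai : a i ∈ ball E (Set.range a) 0 := ⟨i, rfl⟩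
      obtain ⟨n, hn⟩ := Filter.nonempty_of_mem (hGmem 0 (a i) hai)
      rw [← hn]
      exact (hgs n).maps i
  -- assembly
  have hCa : ∀ v, (∃ i, conn E (a i) v) ↔ ∃ m, v ∈ ball E (Set.range a) m := by
    intro v
    rw [show (∃ i, conn E (a i) v) ↔ v ∈ {v | ∃ i, conn E (a i) v} from Iff.rfl,
      conn_eq_iUnion_ball]
    exact Set.mem_iUnion
  have hCb : ∀ v, (∃ i, conn E (b i) v) ↔ ∃ m, v ∈ ball E (Set.range b) m := by
    intro v
    rw [show (∃ i, conn E (b i) v) ↔ v ∈ {v | ∃ i, conn E (b i) v} from Iff.rfl,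
      conn_eq_iUnion_ball]
    exact Set.mem_iUnion
  have hF : ∀ x : ↥{v | ∃ i, conn E (a i) v}, ∃ i, conn E (b i) (G ↑x) := by
    rintro ⟨x, hx⟩
    obtain ⟨m, hm⟩ := (hCa x).mp hx
    refine (hCb (G x)).mpr ⟨m, ?_⟩
    rw [← (hGood m).img]
    exact ⟨x, hm, rfl⟩
  set F : ↥{v | ∃ i, conn E (a i) v} → ↥{v | ∃ i, conn E (b i) v} :=
    fun x => ⟨G ↑x, hF x⟩ with hFdef
  have hbij : Function.Bijective F := by
    constructor
    · rintro ⟨x, hx⟩ ⟨y, hy⟩ hxy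
      obtain ⟨m, hm⟩ := (hCa x).mp hx
      obtain ⟨m', hm'⟩ := (hCa y).mp hy
      have h1 : x ∈ ball E (Set.range a) (max m m') := ball_mono E _ (le_max_left m m') hm
      have h2 : y ∈ ball E (Set.range a) (max m m') := ball_mono E _ (le_max_right m m') hm'
      exact Subtype.ext ((hGood (max m m')).inj x h1 y h2 (congrArg Subtype.val hxy))
    · rintro ⟨w, hw⟩
      obtain ⟨m, hm⟩ := (hCb w).mp hw
      rw [← (hGood m).img] at hm
      obtain ⟨x, hx, hgx⟩ := hm
      exact ⟨⟨x, (hCa x).mpr ⟨m, hx⟩⟩, Subtype.ext hgx⟩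
  refine ⟨Equiv.ofBijective F hbij, ?_, ?_⟩
  · rintro ⟨x, hx⟩ ⟨y, hy⟩
    obtain ⟨m, hm⟩ := (hCa x).mp hx
    obtain ⟨m', hm'⟩ := (hCa y).mp hy
    have h1 : x ∈ ball E (Set.range a) (max m m') := ball_mono E _ (le_max_left m m') hm
    have h2 : y ∈ ball E (Set.range a) (max m m') := ball_mono E _ (le_max_right m m') hm'
    exact (hGood (max m m')).edge x h1 y h2
  · rintro ⟨x, hx⟩ i hxi
    show G x = b i
    rw [show x = a i from hxi]
    exact (hGood 0).maps i


end L11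

end AutoStruct
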